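/- Discounted-ratio Bellman-difference identity: for every policy π, every function Ṽ : S → ℝ and every (a,s) ∈ A × S, Σ_{a'∈A, s'∈S} p_∞(a',s') ω^π(a',s';a,s) (γ Σ_{s''∈S} p(s''|a',s') Ṽ(s'') − Ṽ(s')) = −(1−γ) Ṽ(s); in particular the left-hand side does not depend on a. -/

import Mathlib

namespace VEPO

variable {S A : Type} [Fintype S] [Fintype A] [DecidableEq S] [DecidableEq A]

/-- A probability mass function on a finite type, represented as a real-valued function. -/
def IsPMF {X : Type} [Fintype X] (f : X → ℝ) : Prop :=
  (∀ x, 0 ≤ f x) ∧ ∑ x : X, f x = 1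

/-- A transition kernel: for each action-state pair `(a, s)`, a pmf `p a s` on next states. -/
def IsKernel (p : A → S → S → ℝ) : Prop := ∀ a s, IsPMF (p a s)

/-- A policy: for each state `s`, a pmf `π s` on actions. -/
def IsPolicy (π : S → A → ℝ) : Prop := ∀ s, IsPMF (π s)

/-- The `t`-step visitation probability `p_t^π(s' | a, s)`. -/
def visit (p : A → S → S → ℝ) (π : S → A → ℝ) : ℕ → A → S → S → ℝ
  | 0, _, s, s' => if s' = s then 1 else 0
  | 1, a, s, s' => p a s s'
  | (t + 2), a, s, s' =>
      ∑ s'' : S, visit p π (t + 1) a s s'' * ∑ a'' : A, π s'' a'' * p a'' s'' s'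

/-- The Q-function `Q^π(a, s)`. -/
noncomputable def Qfun (p : A → S → S → ℝ) (r : S → A → ℝ) (γ : ℝ)
    (π : S → A → ℝ) (a : A) (s : S) : ℝ :=
  r s a + ∑' t : ℕ, γ ^ (t + 1) *
    ∑ s' : S, visit p π (t + 1) a s s' * ∑ a' : A, π s' a' * r s' a'

/-- The value function `V^π(s)`. -/
noncomputable def Vfun (p : A → S → S → ℝ) (r : S → A → ℝ) (γ : ℝ)
    (π : S → A → ℝ) (s : S) : ℝ :=
  ∑ a : A, π s a * Qfun p r γ π a s

/-- The advantage function `A^π(a, s)`. -/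
noncomputable def Adv (p : A → S → S → ℝ) (r : S → A → ℝ) (γ : ℝ)
    (π : S → A → ℝ) (a : A) (s : S) : ℝ :=
  Qfun p r γ π a s - Vfun p r γ π s

/-- The conditional discounted visitation probability `d^π(s' | a, s)`. -/
noncomputable def dvisit (p : A → S → S → ℝ) (γ : ℝ) (π : S → A → ℝ)
    (s' : S) (a : A) (s : S) : ℝ :=
  (1 - γ) * ∑' t : ℕ, γ ^ t * visit p π t a s s'

/-- The integrated discounted visitation probability `d^{π,ν}(s')`. -/
noncomputable def dnu (p : A → S → S → ℝ) (γ : ℝ) (ν : S → ℝ)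
    (π : S → A → ℝ) (s' : S) : ℝ :=
  ∑ s : S, ∑ a : A, π s a * ν s * dvisit p γ π s' a s

/-- The integrated value `V(π) = Σ_s ν(s) V^π(s)`. -/
noncomputable def IntV (p : A → S → S → ℝ) (r : S → A → ℝ) (γ : ℝ) (ν : S → ℝ)
    (π : S → A → ℝ) : ℝ :=
  ∑ s : S, ν s * Vfun p r γ π s

/-- The first-order term `η₁(π₁, π₂)`. -/
noncomputable def eta1 (p : A → S → S → ℝ) (r : S → A → ℝ) (γ : ℝ) (ν : S → ℝ)
    (π₁ π₂ : S → A → ℝ) : ℝ :=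
  ∑ a : A, ∑ s : S, π₁ s a * Adv p r γ π₂ a s * dnu p γ ν π₂ s

/-- The higher-order remainder `η₂(π₁, π₂)`. -/
noncomputable def eta2 (p : A → S → S → ℝ) (r : S → A → ℝ) (γ : ℝ) (ν : S → ℝ)
    (π₁ π₂ : S → A → ℝ) : ℝ :=
  ∑ a : A, ∑ s : S, (π₁ s a - π₂ s a) * Adv p r γ π₂ a s *
    (dnu p γ ν π₁ s - dnu p γ ν π₂ s)

/-- Total variation distance between two pmfs on a finite type. -/
noncomputable def DTV {X : Type} [Fintype X] (μ₁ μ₂ : X → ℝ) : ℝ :=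
  (1 / 2) * ∑ x : X, |μ₁ x - μ₂ x|

/-- Kullback–Leibler divergence between two pmfs on a finite type, valued in `EReal`
(equal to `⊤` if `μ₁` is not absolutely continuous w.r.t. `μ₂`). -/
noncomputable def DKL {X : Type} [Fintype X] (μ₁ μ₂ : X → ℝ) : EReal :=
  ∑ x : X, (if μ₁ x = 0 then (0 : EReal)
    else if μ₂ x = 0 then (⊤ : EReal)
    else ((μ₁ x * Real.log (μ₁ x / μ₂ x) : ℝ) : EReal))

/-- Conditional discounted stationary probability ratio `ω^π(a', s'; a, s)`. -/
noncomputable def ratio (p : A → S → S → ℝ) (γ : ℝ) (pinf : A → S → ℝ)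
    (π : S → A → ℝ) (a' : A) (s' : S) (a : A) (s : S) : ℝ :=
  (1 - γ) * ((if a' = a ∧ s' = s then 1 else 0) +
    ∑' t : ℕ, γ ^ (t + 1) * (π s' a' * visit p π (t + 1) a s s')) / pinf a' s'

/-- Integrated discounted stationary probability ratio `ω^{π,ν}(a', s')`. -/
noncomputable def rationu (p : A → S → S → ℝ) (γ : ℝ) (pinf : A → S → ℝ) (ν : S → ℝ)
    (π : S → A → ℝ) (a' : A) (s' : S) : ℝ :=
  ∑ a : A, ∑ s : S, π s a * ν s * ratio p γ pinf π a' s' a s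

/-- Marginal state distribution `p̄_t^{π,ν}` at time `t` when `S₀ ~ ν` and actions follow `π`. -/
def marg (p : A → S → S → ℝ) (π : S → A → ℝ) (ν : S → ℝ) : ℕ → S → ℝ
  | 0, s' => ν s'
  | (t + 1), s' => ∑ s : S, marg p π ν t s * ∑ a : A, π s a * p a s s'

/-- Conditional discounted state–action visitation `q^π(a', s'; a, s)`. -/
noncomputable def qvisit (p : A → S → S → ℝ) (γ : ℝ) (π : S → A → ℝ)
    (a' : A) (s' : S) (a : A) (s : S) : ℝ :=
  (1 - γ) * ((if a' = a ∧ s' = s then 1 else 0) +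
    ∑' t : ℕ, γ ^ (t + 1) * (π s' a' * visit p π (t + 1) a s s'))

/-- The estimating function `ψ(o) = ψ₁ + ψ₂(o) + ψ₃(o)` evaluated at a data tuple
`o = (s, a, rr, s')`, for nuisance functions `Ṽ = Vt`, `Ã = At`, `ω̃ = ωt`
(with `ωt a' s' a s = ω̃(a',s'; a,s)`) and `d̃ = dt` (with `dt s* a s = d̃(s* | a, s)`). -/
noncomputable def psi (γ : ℝ) (ν : S → ℝ) (π πold : S → A → ℝ)
    (Vt : S → ℝ) (At : A → S → ℝ) (ωt : A → S → A → S → ℝ) (dt : S → A → S → ℝ)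
    (s : S) (a : A) (rr : ℝ) (s' : S) : ℝ :=
  let dtnu : S → ℝ := fun sstar => ∑ a0 : A, ∑ s0 : S, πold s0 a0 * ν s0 * dt sstar a0 s0
  let ωtnu : A → S → ℝ := fun a1 s1 => ∑ a0 : A, ∑ s0 : S, πold s0 a0 * ν s0 * ωt a1 s1 a0 s0
  (∑ sstar : S, dtnu sstar * ∑ astar : A, π sstar astar * At astar sstar)
  + (1 / (1 - γ)) * ∑ sstar : S, dtnu sstar * ∑ astar : A,
      (π sstar astar - πold sstar astar) * ωt a s astar sstar *
        (rr + γ * Vt s' - Vt s - At a s)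
  + (ωtnu a s / (1 - γ)) * ∑ astar : A,
      (γ * ∑ a' : A, πold s' a' * ∑ sstar : S, dt sstar a' s' * π sstar astar * At astar sstar
       - ∑ sstar : S, dt sstar a s * π sstar astar * At astar sstar
       + (1 - γ) * π s astar * At astar s)

/-- The expectation `E[ψ(O)]` of the estimating function, where `(A₀, S₀) ~ p_∞`,
`S₁ | (A₀, S₀) ~ p(· | A₀, S₀)` and `E[R₀ | A₀, S₀] = r(S₀, A₀)`;  since `ψ` is affine
in its reward argument with a coefficient not depending on `s'`, this finite sum is
exactly the expectation of `ψ(O)`. -/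
noncomputable def Epsi (p : A → S → S → ℝ) (r : S → A → ℝ) (γ : ℝ) (ν : S → ℝ)
    (pinf : A → S → ℝ) (π πold : S → A → ℝ)
    (Vt : S → ℝ) (At : A → S → ℝ) (ωt : A → S → A → S → ℝ) (dt : S → A → S → ℝ) : ℝ :=
  ∑ a : A, ∑ s : S, pinf a s * ∑ s' : S, p a s s' *
    psi γ ν π πold Vt At ωt dt s a (r s a) s'

lemma visit_nonneg (p : A → S → S → ℝ) (π : S → A → ℝ)
    (hp : IsKernel p) (hπ : IsPolicy π) :
    ∀ (t : ℕ) (a : A) (s s' : S), 0 ≤ visit p π t a s s'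
  | 0, a, s, s' => by simp only [visit]; split <;> norm_num
  | 1, a, s, s' => (hp a s).1 s'
  | (t+2), a, s, s' => by
    simp only [visit]
    apply Finset.sum_nonneg
    intro s'' _
    exact mul_nonneg (visit_nonneg p π hp hπ (t+1) a s s'')
      (Finset.sum_nonneg fun a'' _ => mul_nonneg ((hπ s'').1 a'') ((hp a'' s'').1 s'))

lemma visit_sum_one (p : A → S → S → ℝ) (π : S → A → ℝ)
    (hp : IsKernel p) (hπ : IsPolicy π) :
    ∀ (t : ℕ) (a : A) (s : S), ∑ s' : S, visit p π t a s s' = 1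
  | 0, a, s => by simp [visit]
  | 1, a, s => (hp a s).2
  | (t+2), a, s => by
    simp only [visit]
    rw [Finset.sum_comm]
    have h : ∀ s'' : S, ∑ s' : S, visit p π (t+1) a s s'' * ∑ a'' : A, π s'' a'' * p a'' s'' s'
        = visit p π (t+1) a s s'' := by
      intro s''
      rw [← Finset.mul_sum]
      have : ∑ s' : S, ∑ a'' : A, π s'' a'' * p a'' s'' s' = 1 := by
        rw [Finset.sum_comm]
        have : ∀ a'' : A, ∑ s' : S, π s'' a'' * p a'' s'' s' = π s'' a'' := by
          intro a''; rw [← Finset.mul_sum, (hp a'' s'').2, mul_one]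
        simp only [this]; exact (hπ s'').2
      rw [this, mul_one]
    simp only [h]
    exact visit_sum_one p π hp hπ (t+1) a s

lemma visit_le_one (p : A → S → S → ℝ) (π : S → A → ℝ)
    (hp : IsKernel p) (hπ : IsPolicy π) (t : ℕ) (a : A) (s s' : S) :
    visit p π t a s s' ≤ 1 := by
  calc visit p π t a s s' ≤ ∑ x : S, visit p π t a s x :=
        Finset.single_le_sum (fun x _ => visit_nonneg p π hp hπ t a s x) (Finset.mem_univ s')
    _ = 1 := visit_sum_one p π hp hπ t a s

theorem ratio_bellman_difference_identity {S A : Type} [Fintype S] [Fintype A] [DecidableEq S] [DecidableEq A]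
    [Nonempty S] [Nonempty A]
    (p : A → S → S → ℝ) (γ : ℝ) (pinf : A → S → ℝ)
    (hp : IsKernel p) (hγ0 : 0 ≤ γ) (hγ1 : γ < 1)
    (hpinf : IsPMF (fun as : A × S => pinf as.1 as.2)) (hpos : ∀ a s, 0 < pinf a s)
    (π : S → A → ℝ) (hπ : IsPolicy π) :
    ∀ (Vt : S → ℝ) (a : A) (s : S),
      (∑ a' : A, ∑ s' : S, pinf a' s' * ratio p γ pinf π a' s' a s *
        (γ * (∑ s'' : S, p a' s' s'' * Vt s'') - Vt s')) = -(1 - γ) * Vt s := by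
  intro Vt a s
  set B : A → S → ℝ := fun a' s' => γ * (∑ s'' : S, p a' s' s'' * Vt s'') - Vt s' with hB
  set G : ℕ → ℝ := fun t => ∑ s' : S, visit p π t a s s' * Vt s' with hG
  set M : ℝ := ∑ s' : S, |Vt s'| with hM
  have hγabs : |γ| < 1 := by rw [abs_of_nonneg hγ0]; exact hγ1
  have hGb : ∀ t, |G t| ≤ M := by
    intro t
    calc |G t| ≤ ∑ s' : S, |visit p π t a s s' * Vt s'| := Finset.abs_sum_le_sum_abs _ _
      _ ≤ ∑ s' : S, |Vt s'| := by
          apply Finset.sum_le_sum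
          intro s' _
          rw [abs_mul, abs_of_nonneg (visit_nonneg p π hp hπ t a s s')]
          calc visit p π t a s s' * |Vt s'| ≤ 1 * |Vt s'| :=
                mul_le_mul_of_nonneg_right (visit_le_one p π hp hπ t a s s') (abs_nonneg _)
            _ = |Vt s'| := one_mul _
  -- summability of the shifted discounted value sequence
  have hkSumm : Summable (fun t : ℕ => γ ^ (t+1) * G (t+1)) := by
    apply Summable.of_norm_bounded (g := fun t : ℕ => M * |γ| ^ (t+1))
    · exact ((summable_geometric_of_lt_one (abs_nonneg γ) hγabs).mul_left M).comp_injective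
        (add_left_injective 1)
    · intro t
      rw [Real.norm_eq_abs, abs_mul, abs_pow]
      calc |γ| ^ (t+1) * |G (t+1)| ≤ |γ| ^ (t+1) * M :=
            mul_le_mul_of_nonneg_left (hGb (t+1)) (by positivity)
        _ = M * |γ| ^ (t+1) := mul_comm _ _
  -- per-(a',s') summability
  have hSumm : ∀ a' s', Summable (fun t : ℕ =>
      γ ^ (t+1) * (π s' a' * visit p π (t+1) a s s') * B a' s') := by
    intro a' s'
    apply Summable.of_norm_bounded (g := fun t : ℕ => |B a' s'| * |γ| ^ (t+1))
    · exact ((summable_geometric_of_lt_one (abs_nonneg γ) hγabs).mul_left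
        |B a' s'|).comp_injective (add_left_injective 1)
    · intro t
      rw [Real.norm_eq_abs, abs_mul, abs_mul, abs_pow]
      have h1 : |π s' a' * visit p π (t+1) a s s'| ≤ 1 := by
        rw [abs_mul, abs_of_nonneg ((hπ s').1 a'),
          abs_of_nonneg (visit_nonneg p π hp hπ (t+1) a s s')]
        calc π s' a' * visit p π (t+1) a s s' ≤ 1 * 1 :=
              mul_le_mul ((by
                calc π s' a' ≤ ∑ x : A, π s' x :=
                      Finset.single_le_sum (fun x _ => (hπ s').1 x) (Finset.mem_univ a')
                  _ = 1 := (hπ s').2)) (visit_le_one p π hp hπ (t+1) a s s')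
                (visit_nonneg p π hp hπ (t+1) a s s') zero_le_one
          _ = 1 := one_mul 1
      calc |γ| ^ (t+1) * |π s' a' * visit p π (t+1) a s s'| * |B a' s'|
          ≤ |γ| ^ (t+1) * 1 * |B a' s'| := by
            apply mul_le_mul_of_nonneg_right _ (abs_nonneg _)
            exact mul_le_mul_of_nonneg_left h1 (by positivity)
        _ = |B a' s'| * |γ| ^ (t+1) := by ring
  -- cancel pinf
  have hcancel : ∀ a' s', pinf a' s' * ratio p γ pinf π a' s' a s * B a' s'
      = (1-γ) * ((if a' = a ∧ s' = s then 1 else 0) * B a' s')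
        + (1-γ) * ((∑' t : ℕ, γ^(t+1) * (π s' a' * visit p π (t+1) a s s')) * B a' s') := by
    intro a' s'
    unfold ratio
    field_simp [(hpos a' s').ne']
    by_cases h : a' = a ∧ s' = s <;> simp [h] <;> ring
  change ∑ a' : A, ∑ s' : S, pinf a' s' * ratio p γ pinf π a' s' a s * B a' s' = _
  simp only [hcancel]
  rw [show (∑ a' : A, ∑ s' : S,
      ((1-γ) * ((if a' = a ∧ s' = s then 1 else 0) * B a' s')
        + (1-γ) * ((∑' t : ℕ, γ^(t+1) * (π s' a' * visit p π (t+1) a s s')) * B a' s')))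
    = (1-γ) * (∑ a' : A, ∑ s' : S, (if a' = a ∧ s' = s then 1 else 0) * B a' s')
      + (1-γ) * (∑ a' : A, ∑ s' : S,
          (∑' t : ℕ, γ^(t+1) * (π s' a' * visit p π (t+1) a s s')) * B a' s') by
    simp only [Finset.sum_add_distrib, Finset.mul_sum]]
  -- delta part
  have hdelta : (∑ a' : A, ∑ s' : S, (if a' = a ∧ s' = s then 1 else 0) * B a' s') = B a s := by
    simp [ite_and, Finset.sum_ite_eq, Finset.sum_ite_eq']
  -- key Bellman recursion
  have hstep : ∀ t : ℕ, G (t+2) = ∑ s' : S, visit p π (t+1) a s s' *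
      ∑ a' : A, π s' a' * ∑ s'' : S, p a' s' s'' * Vt s'' := by
    intro t
    simp only [hG, visit, Finset.sum_mul, Finset.mul_sum]
    rw [Finset.sum_comm]
    apply Finset.sum_congr rfl
    intro x _
    rw [Finset.sum_comm]
    apply Finset.sum_congr rfl
    intro a' _
    apply Finset.sum_congr rfl
    intro s'' _
    ring
  have hkey : ∀ t : ℕ, (∑ a' : A, ∑ s' : S,
      π s' a' * visit p π (t+1) a s s' * B a' s') = γ * G (t+2) - G (t+1) := by
    intro t
    have hrow : ∀ s' : S, (∑ a' : A, π s' a' * visit p π (t+1) a s s' * B a' s')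
        = γ * (visit p π (t+1) a s s' * ∑ a' : A, π s' a' * ∑ s'' : S, p a' s' s'' * Vt s'')
          - visit p π (t+1) a s s' * Vt s' := by
      intro s'
      have hterm : ∀ a' : A, π s' a' * visit p π (t+1) a s s' * B a' s'
          = γ * (visit p π (t+1) a s s' * (π s' a' * ∑ s'' : S, p a' s' s'' * Vt s''))
            - π s' a' * (visit p π (t+1) a s s' * Vt s') := by
        intro a'; simp only [hB]; ring
      rw [Finset.sum_congr rfl (fun a' _ => hterm a'), Finset.sum_sub_distrib,
        ← Finset.mul_sum, ← Finset.mul_sum, ← Finset.sum_mul, (hπ s').2, one_mul]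
    rw [Finset.sum_comm, Finset.sum_congr rfl (fun s' _ => hrow s'),
      Finset.sum_sub_distrib, ← Finset.mul_sum, ← hstep t]
  -- tsum part
  have htsum : (∑ a' : A, ∑ s' : S,
      (∑' t : ℕ, γ^(t+1) * (π s' a' * visit p π (t+1) a s s')) * B a' s')
      = -(γ * G 1) := by
    have step1 : ∀ a' s', (∑' t : ℕ, γ^(t+1) * (π s' a' * visit p π (t+1) a s s')) * B a' s'
        = ∑' t : ℕ, γ^(t+1) * (π s' a' * visit p π (t+1) a s s') * B a' s' :=
      fun a' s' => (tsum_mul_right).symm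
    simp only [step1]
    rw [show (∑ a' : A, ∑ s' : S,
        ∑' t : ℕ, γ^(t+1) * (π s' a' * visit p π (t+1) a s s') * B a' s')
      = ∑' t : ℕ, ∑ a' : A, ∑ s' : S,
          γ^(t+1) * (π s' a' * visit p π (t+1) a s s') * B a' s' by
      rw [Summable.tsum_finsetSum (fun a' _ => summable_sum (fun s' _ => hSumm a' s'))]
      apply Finset.sum_congr rfl
      intro a' _
      rw [Summable.tsum_finsetSum (fun s' _ => hSumm a' s')]]
    have inner : ∀ t : ℕ, (∑ a' : A, ∑ s' : S,
        γ^(t+1) * (π s' a' * visit p π (t+1) a s s') * B a' s')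
        = γ^(t+2) * G (t+2) - γ^(t+1) * G (t+1) := by
      intro t
      have : (∑ a' : A, ∑ s' : S, γ^(t+1) * (π s' a' * visit p π (t+1) a s s') * B a' s')
          = γ^(t+1) * ∑ a' : A, ∑ s' : S, π s' a' * visit p π (t+1) a s s' * B a' s' := by
        rw [Finset.mul_sum]
        apply Finset.sum_congr rfl
        intro a' _
        rw [Finset.mul_sum]
        apply Finset.sum_congr rfl
        intros; ring
      rw [this, hkey t]
      ring
    simp only [inner]
    rw [Summable.tsum_sub ((summable_nat_add_iff 1).mpr hkSumm) hkSumm]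
    have hshift : (∑' t : ℕ, γ^(t+1+1) * G (t+1+1))
        = (∑' t : ℕ, γ^(t+1) * G (t+1)) - γ^(0+1) * G (0+1) := by
      have := Summable.tsum_eq_zero_add hkSumm
      linarith [this]
    rw [show (∑' t : ℕ, γ^(t+2) * G (t+2)) = ∑' t : ℕ, γ^(t+1+1) * G (t+1+1) from rfl,
      hshift]
    ring
  rw [hdelta, htsum]
  have hBas : B a s = γ * G 1 - Vt s := by
    simp [hB, hG, visit]
  rw [hBas]
  ring

end VEPO
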